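/- Let G be a simple graph, u, v vertices of G, and G' = G[u→v] the graph obtained by the Kelmans operation. For every integer s ≥ 1, the number of s-cliques of G' is at least the number of s-cliques of G. -/

import Mathlib

/-- The Kelmans operation `G[u → v]`: every edge `wu` with `w ∈ N(u) \\ N[v]` is removed
and replaced by the edge `wv`. -/
def kelmans {V : Type*} (G : SimpleGraph V) (u v : V) : SimpleGraph V where
  Adj x y := x ≠ y ∧
    ((G.Adj x y ∧ ¬ ((x = u ∧ G.Adj u y ∧ ¬ G.Adj v y ∧ y ≠ v) ∨
                     (y = u ∧ G.Adj u x ∧ ¬ G.Adj v x ∧ x ≠ v))) ∨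
     ((x = v ∧ G.Adj u y ∧ ¬ G.Adj v y ∧ y ≠ v) ∨
      (y = v ∧ G.Adj u x ∧ ¬ G.Adj v x ∧ x ≠ v)))
  symm := by
    constructor
    rintro x y ⟨hxy, h⟩
    refine ⟨hxy.symm, ?_⟩
    have hsymm : G.Adj x y ↔ G.Adj y x := ⟨SimpleGraph.Adj.symm, SimpleGraph.Adj.symm⟩
    tauto
  loopless := by constructor; rintro x ⟨h, -⟩; exact h rfl

lemma kelmans_key {V : Type*} (G : SimpleGraph V) (u v : V) (huv : u ≠ v) (s : ℕ)
    {K : Finset V} (hK : G.IsNClique s K) (hK' : ¬ (kelmans G u v).IsNClique s K) :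
    u ∈ K ∧ v ∉ K ∧ ∃ w ∈ K, G.Adj u w ∧ ¬ G.Adj v w ∧ w ≠ v := by
  classical
  have hbad : ∃ x ∈ K, ∃ y ∈ K, x ≠ y ∧ ¬ (kelmans G u v).Adj x y := by
    by_contra h
    push_neg at h
    exact hK' ⟨fun x hx y hy hxy => h x hx y hy hxy, hK.2⟩
  obtain ⟨x, hx, y, hy, hxy, hnadj⟩ := hbad
  have hGxy : G.Adj x y := hK.1 hx hy hxy
  have hrem : (x = u ∧ G.Adj u y ∧ ¬ G.Adj v y ∧ y ≠ v) ∨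
      (y = u ∧ G.Adj u x ∧ ¬ G.Adj v x ∧ x ≠ v) := by
    by_contra hr
    exact hnadj ⟨hxy, Or.inl ⟨hGxy, fun h => hr h⟩⟩
  have key : u ∈ K ∧ ∃ w ∈ K, G.Adj u w ∧ ¬ G.Adj v w ∧ w ≠ v := by
    rcases hrem with ⟨rfl, h⟩ | ⟨rfl, h⟩
    · exact ⟨hx, y, hy, h⟩
    · exact ⟨hy, x, hx, h⟩
  obtain ⟨hu, w, hw, hadj, hnvw, hwv⟩ := key
  refine ⟨hu, fun hv => hnvw (hK.1 hv hw (Ne.symm hwv)), w, hw, hadj, hnvw, hwv⟩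

/-- The number of `s`-cliques does not decrease under the Kelmans operation. -/
theorem stmt_3 {V : Type*} [Fintype V] (G : SimpleGraph V) (u v : V) (s : ℕ) (hs : 1 ≤ s) :
    {t : Finset V | G.IsNClique s t}.ncard ≤
      {t : Finset V | (kelmans G u v).IsNClique s t}.ncard := by
  classical
  by_cases huv : u = v
  · subst huv
    have hG : kelmans G u u = G := by
      ext x y
      constructor
      · rintro ⟨hxy, h⟩; tauto
      · intro h; exact ⟨h.ne, Or.inl ⟨h, by tauto⟩⟩
    rw [hG]
  · set f : Finset V → Finset V := fun K =>
      if (kelmans G u v).IsNClique s K then K else insert v (K.erase u) with hf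
    apply Set.ncard_le_ncard_of_injOn f ?_ ?_ (Set.toFinite _)
    · intro K hK
      simp only [Set.mem_setOf_eq] at hK ⊢
      by_cases h : (kelmans G u v).IsNClique s K
      · simp [hf, h]
      · obtain ⟨hu, hv, w, hw, hadj, hnvw, hwv⟩ := kelmans_key G u v huv s hK h
        have hcard : (insert v (K.erase u)).card = s := by
          rw [Finset.card_insert_of_notMem (fun hmem => hv (Finset.mem_of_mem_erase hmem)),
            Finset.card_erase_of_mem hu, hK.2]
          omega
        have hclique : (kelmans G u v).IsClique (↑(insert v (K.erase u)) : Set V) := by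
          intro x hx y hy hxy
          simp only [Finset.mem_coe, Finset.mem_insert, Finset.mem_erase] at hx hy
          -- helper: adjacency v-z for z ∈ K, z ≠ u
          have hvz : ∀ z ∈ K, z ≠ u → (kelmans G u v).Adj v z := by
            intro z hz hzu
            have hzv : z ≠ v := fun h => hv (h ▸ hz)
            by_cases hGvz : G.Adj v z
            · exact ⟨Ne.symm hzv, Or.inl ⟨hGvz, by
                rintro (⟨h1, -⟩ | ⟨h1, -, -, h2⟩)
                · exact huv h1.symm
                · exact h2 rfl⟩⟩
            · have hGuz : G.Adj u z := hK.1 hu hz (Ne.symm hzu)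
              exact ⟨Ne.symm hzv, Or.inr (Or.inl ⟨rfl, hGuz, hGvz, hzv⟩)⟩
          rcases hx with hxv | ⟨hxu, hxK⟩
          · rcases hy with hyv | ⟨hyu, hyK⟩
            · exact absurd (hxv.trans hyv.symm) hxy
            · rw [hxv]; exact hvz y hyK hyu
          · rcases hy with hyv | ⟨hyu, hyK⟩
            · rw [hyv]; exact (hvz x hxK hxu).symm
            · have hGxy : G.Adj x y := hK.1 hxK hyK hxy
              exact ⟨hxy, Or.inl ⟨hGxy, by
                rintro (⟨h1, -⟩ | ⟨h1, -⟩)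
                · exact hxu h1
                · exact hyu h1⟩⟩
        simpa [hf, h] using SimpleGraph.IsNClique.mk hclique hcard
    · intro K1 hK1 K2 hK2 heq
      simp only [Set.mem_setOf_eq] at hK1 hK2
      simp only [hf] at heq
      by_cases h1 : (kelmans G u v).IsNClique s K1 <;>
        by_cases h2 : (kelmans G u v).IsNClique s K2
      · simpa [h1, h2] using heq
      · -- K1 = insert v (K2.erase u)
        rw [if_pos h1, if_neg h2] at heq
        obtain ⟨hu2, hv2, w, hw, hadj, hnvw, hwv⟩ := kelmans_key G u v huv s hK2 h2
        exfalso
        have hwu : w ≠ u := fun h => G.loopless.irrefl u (h ▸ hadj)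
        have hwK1 : w ∈ K1 := by
          rw [heq]; exact Finset.mem_insert_of_mem (Finset.mem_erase.2 ⟨hwu, hw⟩)
        have hvK1 : v ∈ K1 := by rw [heq]; exact Finset.mem_insert_self _ _
        exact hnvw (hK1.1 hvK1 hwK1 (Ne.symm hwv))
      · rw [if_neg h1, if_pos h2] at heq
        obtain ⟨hu1, hv1, w, hw, hadj, hnvw, hwv⟩ := kelmans_key G u v huv s hK1 h1
        exfalso
        have hwu : w ≠ u := fun h => G.loopless.irrefl u (h ▸ hadj)
        have hwK2 : w ∈ K2 := by
          rw [← heq]; exact Finset.mem_insert_of_mem (Finset.mem_erase.2 ⟨hwu, hw⟩)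
        have hvK2 : v ∈ K2 := by rw [← heq]; exact Finset.mem_insert_self _ _
        exact hnvw (hK2.1 hvK2 hwK2 (Ne.symm hwv))
      · rw [if_neg h1, if_neg h2] at heq
        obtain ⟨hu1, hv1, -⟩ := kelmans_key G u v huv s hK1 h1
        obtain ⟨hu2, hv2, -⟩ := kelmans_key G u v huv s hK2 h2
        have hrec : ∀ (K : Finset V), u ∈ K → v ∉ K →
            insert u ((insert v (K.erase u)).erase v) = K := by
          intro K hu hv
          rw [Finset.erase_insert (fun hmem => hv (Finset.mem_of_mem_erase hmem)),
            Finset.insert_erase hu]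
        rw [← hrec K1 hu1 hv1, ← hrec K2 hu2 hv2, heq]
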